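/- Consider the single-resource LP: maximize $\sum_x p_x \mu_x^r$ over the probability simplex subject to $\sum_x p_x \mu_x^d \ge -B/T$, where all $|\mu_x^d| \ge \delta > 0$, arm $x^0$ has $\mu_{x^0}^r = 0$ and $\mu_{x^0}^d > 0$, and $T \ge B/\delta$. Then every basic optimal solution is supported either on (i) a single arm with positive drift, (ii) the null arm $x^0$ together with an arm with negative drift, or (iii) an arm with positive drift together with an arm with negative drift. -/

import Mathlib

lemma sum_two {k : ℕ} {a b : Fin k} (hab : a ≠ b) (s t : ℝ) (f : Fin k → ℝ) :
    ∑ x, (if x = a then s else if x = b then t else 0) * f x = s * f a + t * f b := by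
  have h : ∀ x : Fin k, (if x = a then s else if x = b then t else 0) * f x
      = (if x = a then s * f a else 0) + (if x = b then t * f b else 0) := by
    intro x
    by_cases hxa : x = a
    · subst hxa; simp [if_neg hab]
    · by_cases hxb : x = b
      · subst hxb; simp [hxa, if_neg (Ne.symm hab)]
      · simp [hxa, hxb]
  simp only [h]
  rw [Finset.sum_add_distrib]
  simp [Finset.sum_ite_eq']

lemma sum_three {k : ℕ} {a b c : Fin k} (hab : a ≠ b) (hac : a ≠ c) (hbc : b ≠ c)
    (s t u : ℝ) (f : Fin k → ℝ) :
    ∑ x, (if x = a then s else if x = b then t else if x = c then u else 0) * f x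
      = s * f a + t * f b + u * f c := by
  have h : ∀ x : Fin k, (if x = a then s else if x = b then t else if x = c then u else 0) * f x
      = (if x = a then s * f a else 0) + (if x = b then t * f b else 0)
        + (if x = c then u * f c else 0) := by
    intro x
    by_cases hxa : x = a
    · subst hxa; simp [if_neg hab, if_neg hac]
    · by_cases hxb : x = b
      · subst hxb; simp [hxa, if_neg hbc, if_neg (Ne.symm hab)]
      · by_cases hxc : x = c
        · subst hxc; simp [hxa, hxb, if_neg (Ne.symm hac), if_neg (Ne.symm hbc)]
        · simp [hxa, hxb, hxc]
  simp only [h]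
  rw [Finset.sum_add_distrib, Finset.sum_add_distrib]
  simp [Finset.sum_ite_eq']

lemma sum_support_one {k : ℕ} (a : Fin k) (g : Fin k → ℝ)
    (h0 : ∀ c, c ≠ a → g c = 0) : ∑ x, g x = g a :=
  Finset.sum_eq_single a (fun b _ hb => h0 b hb) (by simp)

lemma sum_support_two {k : ℕ} {a b : Fin k} (hab : a ≠ b) (g : Fin k → ℝ)
    (h0 : ∀ c, c ≠ a → c ≠ b → g c = 0) : ∑ x, g x = g a + g b := by
  classical
  have h : ∑ x, g x = ∑ x ∈ ({a, b} : Finset (Fin k)), g x := by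
    refine (Finset.sum_subset (Finset.subset_univ _) ?_).symm
    intro x _ hx
    simp only [Finset.mem_insert, Finset.mem_singleton, not_or] at hx
    exact h0 x hx.1 hx.2
  rw [h, Finset.sum_insert (by simp [hab]), Finset.sum_singleton]

lemma extreme_perturb {n : ℕ} {S : Set (Fin n → ℝ)} {p v : Fin n → ℝ}
    (hp : p ∈ Set.extremePoints ℝ S) (h1 : p + v ∈ S) (h2 : p - v ∈ S) : v = 0 := by
  have hseg : p ∈ openSegment ℝ (p + v) (p - v) :=
    ⟨1/2, 1/2, by norm_num, by norm_num, by norm_num, by module⟩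
  have h := hp.2 h1 h2 hseg
  have h' : p + v = p + 0 := by simpa using h
  exact add_left_cancel h'

lemma support_perturb {k : ℕ} {S : Set (Fin k → ℝ)} {B T : ℝ} {μd : Fin k → ℝ}
    (hS : S = {p | (∀ x, 0 ≤ p x) ∧ ∑ x, p x = 1 ∧ -B / T ≤ ∑ x, p x * μd x})
    {p : Fin k → ℝ} (hp : p ∈ Set.extremePoints ℝ S)
    (w : Fin k → ℝ) (ε : ℝ) (hε : 0 < ε)
    (hnn : ∀ x, ε * |w x| ≤ p x ∨ w x = 0)
    (hw1 : ∑ x, w x = 0)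
    (hw2 : -B / T ≤ (∑ x, p x * μd x) - ε * |∑ x, w x * μd x|) :
    w = 0 := by
  have hpmem := hp.1
  rw [hS] at hpmem
  obtain ⟨hpos, hsum, hcon⟩ := hpmem
  have hmem : ∀ s : ℝ, |s| ≤ ε → p + s • w ∈ S := by
    intro s hs
    rw [hS]
    refine ⟨?_, ?_, ?_⟩
    · intro x
      simp only [Pi.add_apply, Pi.smul_apply, smul_eq_mul]
      rcases hnn x with h | h
      · have h1 : |s * w x| ≤ ε * |w x| := by
          rw [abs_mul]
          exact mul_le_mul_of_nonneg_right hs (abs_nonneg _)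
        have h2 := neg_abs_le (s * w x)
        linarith
      · simp [h, hpos x]
    · simp only [Pi.add_apply, Pi.smul_apply, smul_eq_mul]
      rw [Finset.sum_add_distrib, ← Finset.mul_sum, hw1, hsum]
      ring
    · simp only [Pi.add_apply, Pi.smul_apply, smul_eq_mul]
      have key : ∀ x, (p x + s * w x) * μd x = p x * μd x + s * (w x * μd x) :=
        fun x => by ring
      rw [Finset.sum_congr rfl fun x _ => key x, Finset.sum_add_distrib, ← Finset.mul_sum]
      have h1 : |s * ∑ x, w x * μd x| ≤ ε * |∑ x, w x * μd x| := by
        rw [abs_mul]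
        exact mul_le_mul_of_nonneg_right hs (abs_nonneg _)
      have h2 := neg_abs_le (s * ∑ x, w x * μd x)
      linarith
  have h1 : p + ε • w ∈ S := hmem ε (by rw [abs_of_pos hε])
  have h2 : p - ε • w ∈ S := by
    have he : p - ε • w = p + (-ε) • w := by module
    rw [he]
    exact hmem (-ε) (by rw [abs_neg, abs_of_pos hε])
  have h0 : ε • w = 0 := extreme_perturb hp h1 h2
  rcases smul_eq_zero.mp h0 with h | h
  · exact absurd h (ne_of_gt hε)
  · exact h

theorem stmt5 (k : ℕ) (μr μd : Fin k → ℝ) (x0 : Fin k) (B T δ : ℝ)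
    (hδ : 0 < δ) (hdrift : ∀ x, δ ≤ |μd x|)
    (hrange : ∀ x, μr x ∈ Set.Icc (0 : ℝ) 1) (hdrange : ∀ x, μd x ∈ Set.Icc (-1 : ℝ) 1)
    (hr0 : μr x0 = 0) (hd0 : 0 < μd x0)
    (hB : 0 ≤ B) (hT : B / δ ≤ T) (hTpos : 0 < T)
    (S : Set (Fin k → ℝ))
    (hS : S = {p | (∀ x, 0 ≤ p x) ∧ ∑ x, p x = 1 ∧ -B / T ≤ ∑ x, p x * μd x})
    (p : Fin k → ℝ) (hp : p ∈ Set.extremePoints ℝ S)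
    (hopt : ∀ q ∈ S, ∑ x, μr x * q x ≤ ∑ x, μr x * p x) :
    (∃ x, 0 < μd x ∧ {y | p y ≠ 0} ⊆ ({x} : Set (Fin k))) ∨
    (∃ x, μd x < 0 ∧ {y | p y ≠ 0} ⊆ ({x0, x} : Set (Fin k))) ∨
    (∃ xp xn, 0 < μd xp ∧ μd xn < 0 ∧ {y | p y ≠ 0} ⊆ ({xp, xn} : Set (Fin k))) := by
  have hpmem := hp.1
  rw [hS] at hpmem
  obtain ⟨hpos, hsum, hcon⟩ := hpmem
  have hdne : ∀ x : Fin k, μd x ≠ 0 := by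
    intro x hx
    have h := hdrift x
    rw [hx] at h
    simp at h
    linarith
  -- Step 1: two support arms have distinct drifts
  have step1 : ∀ a b : Fin k, a ≠ b → p a ≠ 0 → p b ≠ 0 → μd a ≠ μd b := by
    intro a b hab hpa hpb heq
    have hpa' : 0 < p a := lt_of_le_of_ne (hpos a) (Ne.symm hpa)
    have hpb' : 0 < p b := lt_of_le_of_ne (hpos b) (Ne.symm hpb)
    set w : Fin k → ℝ := fun x => if x = a then 1 else if x = b then -1 else 0 with hw
    have hgen : ∀ f : Fin k → ℝ, ∑ x, w x * f x = f a - f b := by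
      intro f
      simp only [hw]
      rw [sum_two hab 1 (-1) f]
      ring
    have hεpos : 0 < min (p a) (p b) := lt_min hpa' hpb'
    have hw0 : w = 0 := by
      refine support_perturb hS hp w (min (p a) (p b)) hεpos ?_ ?_ ?_
      · intro x
        by_cases hxa : x = a
        · left
          rw [hxa]
          have hwa : w a = 1 := by simp [hw]
          rw [hwa]
          simpa using min_le_left (p a) (p b)
        · by_cases hxb : x = b
          · left
            rw [hxb]
            have hwb : w b = -1 := by simp [hw, if_neg (Ne.symm hab)]
            rw [hwb]
            simpa using min_le_right (p a) (p b)
          · right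
            simp [hw, hxa, hxb]
      · have h1 := hgen (fun _ => 1)
        simpa using h1
      · rw [hgen μd, heq]
        simpa using hcon
    have hcontra : w a = 0 := congrFun hw0 a
    simp [hw] at hcontra
  -- Step 2: if two arms are in the support, the constraint is tight
  have step2 : ∀ a b : Fin k, a ≠ b → p a ≠ 0 → p b ≠ 0 →
      ∑ x, p x * μd x = -B / T := by
    intro a b hab hpa hpb
    by_contra hne
    have hslack : -B / T < ∑ x, p x * μd x := lt_of_le_of_ne hcon (Ne.symm hne)
    have hpa' : 0 < p a := lt_of_le_of_ne (hpos a) (Ne.symm hpa)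
    have hpb' : 0 < p b := lt_of_le_of_ne (hpos b) (Ne.symm hpb)
    set w : Fin k → ℝ := fun x => if x = a then 1 else if x = b then -1 else 0 with hw
    have hgen : ∀ f : Fin k → ℝ, ∑ x, w x * f x = f a - f b := by
      intro f
      simp only [hw]
      rw [sum_two hab 1 (-1) f]
      ring
    set ε := min (min (p a) (p b)) (((∑ x, p x * μd x) - (-B / T)) / 2) with hε
    have hεpos : 0 < ε := lt_min (lt_min hpa' hpb') (by linarith)
    have hεa : ε ≤ p a := le_trans (min_le_left _ _) (min_le_left _ _)
    have hεb : ε ≤ p b := le_trans (min_le_left _ _) (min_le_right _ _)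
    have hεs : ε ≤ ((∑ x, p x * μd x) - (-B / T)) / 2 := min_le_right _ _
    have hw0 : w = 0 := by
      refine support_perturb hS hp w ε hεpos ?_ ?_ ?_
      · intro x
        by_cases hxa : x = a
        · left
          rw [hxa]
          have hwa : w a = 1 := by simp [hw]
          rw [hwa]
          simpa using hεa
        · by_cases hxb : x = b
          · left
            rw [hxb]
            have hwb : w b = -1 := by simp [hw, if_neg (Ne.symm hab)]
            rw [hwb]
            simpa using hεb
          · right
            simp [hw, hxa, hxb]
      · have h1 := hgen (fun _ => 1)
        simpa using h1
      · rw [hgen μd]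
        have hda := hdrange a
        have hdb := hdrange b
        simp only [Set.mem_Icc] at hda hdb
        have habs : |μd a - μd b| ≤ 2 := by
          rw [abs_le]
          constructor <;> linarith
        have h2 : ε * |μd a - μd b| ≤ ε * 2 :=
          mul_le_mul_of_nonneg_left habs (le_of_lt hεpos)
        linarith
    have hcontra : w a = 0 := congrFun hw0 a
    simp [hw] at hcontra
  -- Step 3: the support has at most two elements
  have step3 : ∀ a b c : Fin k, a ≠ b → a ≠ c → b ≠ c →
      p a ≠ 0 → p b ≠ 0 → p c ≠ 0 → False := by
    intro a b c hab hac hbc hpa hpb hpc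
    have hpa' : 0 < p a := lt_of_le_of_ne (hpos a) (Ne.symm hpa)
    have hpb' : 0 < p b := lt_of_le_of_ne (hpos b) (Ne.symm hpb)
    have hpc' : 0 < p c := lt_of_le_of_ne (hpos c) (Ne.symm hpc)
    set w : Fin k → ℝ := fun x =>
      if x = a then μd b - μd c else if x = b then μd c - μd a
      else if x = c then μd a - μd b else 0 with hw
    have hgen : ∀ f : Fin k → ℝ, ∑ x, w x * f x
        = (μd b - μd c) * f a + (μd c - μd a) * f b + (μd a - μd b) * f c := by
      intro f
      simp only [hw]
      exact sum_three hab hac hbc _ _ _ f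
    set ε := min (min (p a) (p b)) (p c) / 2 with hε
    have hεpos : 0 < ε := by
      have : 0 < min (min (p a) (p b)) (p c) := lt_min (lt_min hpa' hpb') hpc'
      positivity
    have hεa : 2 * ε ≤ p a := by
      have := le_trans (min_le_left (min (p a) (p b)) (p c)) (min_le_left (p a) (p b))
      rw [hε]; linarith
    have hεb : 2 * ε ≤ p b := by
      have := le_trans (min_le_left (min (p a) (p b)) (p c)) (min_le_right (p a) (p b))
      rw [hε]; linarith
    have hεc : 2 * ε ≤ p c := by
      have := min_le_right (min (p a) (p b)) (p c)
      rw [hε]; linarith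
    have habs : ∀ x y : Fin k, |μd x - μd y| ≤ 2 := by
      intro x y
      have hdx := hdrange x
      have hdy := hdrange y
      simp only [Set.mem_Icc] at hdx hdy
      rw [abs_le]
      constructor <;> linarith
    have hw0 : w = 0 := by
      refine support_perturb hS hp w ε hεpos ?_ ?_ ?_
      · intro x
        by_cases hxa : x = a
        · left
          rw [hxa]
          have hwa : w a = μd b - μd c := by simp [hw]
          rw [hwa]
          have := mul_le_mul_of_nonneg_left (habs b c) (le_of_lt hεpos)
          linarith
        · by_cases hxb : x = b
          · left
            rw [hxb]
            have hwb : w b = μd c - μd a := by simp [hw, if_neg (Ne.symm hab)]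
            rw [hwb]
            have := mul_le_mul_of_nonneg_left (habs c a) (le_of_lt hεpos)
            linarith
          · by_cases hxc : x = c
            · left
              rw [hxc]
              have hwc : w c = μd a - μd b := by
                simp [hw, if_neg (Ne.symm hac), if_neg (Ne.symm hbc)]
              rw [hwc]
              have := mul_le_mul_of_nonneg_left (habs a b) (le_of_lt hεpos)
              linarith
            · right
              simp [hw, hxa, hxb, hxc]
      · have h1 := hgen (fun _ => 1)
        simp only [mul_one] at h1
        rw [h1]; ring
      · have h2 := hgen μd
        rw [h2]
        have : (μd b - μd c) * μd a + (μd c - μd a) * μd b + (μd a - μd b) * μd c = 0 := by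
          ring
        rw [this]
        simpa using hcon
    have hcontra : w a = 0 := congrFun hw0 a
    have : μd b - μd c = 0 := by simpa [hw] using hcontra
    exact step1 b c hbc hpb hpc (by linarith)
  -- Final case analysis
  have hBT : B / T ≤ δ := by
    rw [div_le_iff₀ hTpos]
    rw [div_le_iff₀ hδ] at hT
    nlinarith
  have hex : ∃ a : Fin k, p a ≠ 0 := by
    by_contra h
    push_neg at h
    have : ∑ x, p x = 0 := Finset.sum_eq_zero fun x _ => h x
    rw [hsum] at this
    norm_num at this
  obtain ⟨a, hpa⟩ := hex
  have hpa' : 0 < p a := lt_of_le_of_ne (hpos a) (Ne.symm hpa)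
  by_cases hone : ∀ y : Fin k, y ≠ a → p y = 0
  · -- support is exactly {a}
    have hsub : {y | p y ≠ 0} ⊆ ({a} : Set (Fin k)) := by
      intro y hy
      by_contra hyne
      exact hy (hone y (by simpa using hyne))
    rcases lt_trichotomy (μd a) 0 with hda | hda | hda
    · right; left
      refine ⟨a, hda, ?_⟩
      intro y hy
      have := hsub hy
      simp only [Set.mem_singleton_iff] at this
      right
      simpa using this
    · exact absurd hda (hdne a)
    · left
      exact ⟨a, hda, hsub⟩
  · -- support has two elements a, b
    push_neg at hone
    obtain ⟨b, hba, hpb⟩ := hone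
    have hab : a ≠ b := fun h => hba h.symm
    have hpb' : 0 < p b := lt_of_le_of_ne (hpos b) (Ne.symm hpb)
    have hsupp : ∀ c : Fin k, c ≠ a → c ≠ b → p c = 0 := by
      intro c h1 h2
      by_contra hc
      exact step3 a b c hab (fun h => h1 h.symm) (fun h => h2 h.symm) hpa hpb hc
    have hsub : {y | p y ≠ 0} ⊆ ({a, b} : Set (Fin k)) := by
      intro y hy
      by_contra hyne
      simp only [Set.mem_insert_iff, Set.mem_singleton_iff, not_or] at hyne
      exact hy (hsupp y hyne.1 hyne.2)
    have hsum2 : p a + p b = 1 := by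
      rw [← hsum]
      exact (sum_support_two hab p hsupp).symm
    have hsumd : p a * μd a + p b * μd b = -B / T := by
      rw [← step2 a b hab hpa hpb]
      exact (sum_support_two hab (fun x => p x * μd x)
        (fun c h1 h2 => by show p c * μd c = 0; rw [hsupp c h1 h2]; ring)).symm
    rcases lt_trichotomy (μd a) 0 with hda | hda | hda
    · rcases lt_trichotomy (μd b) 0 with hdb | hdb | hdb
      · -- both negative: impossible
        exfalso
        have hda' : μd a ≤ -δ := by
          have := hdrift a
          rw [abs_of_neg hda] at this
          linarith
        have hdb' : μd b ≤ -δ := by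
          have := hdrift b
          rw [abs_of_neg hdb] at this
          linarith
        have hle : p a * μd a + p b * μd b ≤ -δ := by nlinarith
        have hge : -δ ≤ p a * μd a + p b * μd b := by
          rw [hsumd, neg_div]
          linarith
        have heq : p a * μd a + p b * μd b = -δ := le_antisymm hle hge
        have hzero : p a * (μd a + δ) + p b * (μd b + δ) = 0 := by
          linear_combination heq + δ * hsum2
        have hta : p a * (μd a + δ) ≤ 0 :=
          mul_nonpos_of_nonneg_of_nonpos (hpos a) (by linarith)
        have htb : p b * (μd b + δ) ≤ 0 :=
          mul_nonpos_of_nonneg_of_nonpos (hpos b) (by linarith)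
        have hta0 : p a * (μd a + δ) = 0 := by linarith
        have htb0 : p b * (μd b + δ) = 0 := by linarith
        have ha0 : μd a = -δ := by
          rcases mul_eq_zero.mp hta0 with h | h
          · exact absurd h hpa
          · linarith
        have hb0 : μd b = -δ := by
          rcases mul_eq_zero.mp htb0 with h | h
          · exact absurd h hpb
          · linarith
        exact step1 a b hab hpa hpb (by rw [ha0, hb0])
      · exact absurd hdb (hdne b)
      · -- a negative, b positive
        right; right
        refine ⟨b, a, hdb, hda, ?_⟩
        intro y hy
        have := hsub hy
        simp only [Set.mem_insert_iff, Set.mem_singleton_iff] at this ⊢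
        tauto
    · exact absurd hda (hdne a)
    · rcases lt_trichotomy (μd b) 0 with hdb | hdb | hdb
      · -- a positive, b negative
        right; right
        exact ⟨a, b, hda, hdb, hsub⟩
      · exact absurd hdb (hdne b)
      · -- both positive: impossible
        exfalso
        have hBT0 : -B / T ≤ 0 := by
          rw [neg_div]
          have : 0 ≤ B / T := div_nonneg hB (le_of_lt hTpos)
          linarith
        nlinarith [mul_pos hpa' hda, mul_pos hpb' hdb]
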